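/- arXiv:0711.0334 — 2 statements merged into one kernel-verified Lean document; each statement's English description precedes it below -/
import Mathlib

section
/- Let K : [0,1] × [0,1] → ℝ be continuous and symmetric, i.e. K(x,y) = K(y,x) for all x, y ∈ [0,1]. Let (fₖ)ₖ∈ℕ be a sequence of continuous functions on [0,1] whose equivalence classes form a Hilbert basis of L²([0,1]; ℝ), and let (λₖ)ₖ∈ℕ be nonnegative real numbers such that ∫₀¹ K(x,y) fₖ(y) dy = λₖ fₖ(x) for every k and every x ∈ [0,1]. Then the series Σₖ λₖ converges and Σₖ λₖ = ∫₀¹ K(x,x) dx. -/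
open Real Set MeasureTheory Filter
open scoped InnerProductSpace

noncomputable section
namespace TFA

abbrev μ01 : Measure ℝ := volume.restrict (Icc (0:ℝ) 1)
instance : IsFiniteMeasure μ01 := by constructor; simp [μ01, Real.volume_Icc]

lemma meas_univ : (μ01 univ).toReal = 1 := by
  simp [μ01, Real.volume_Icc]

lemma integral_eq_interval (g : ℝ → ℝ) : ∫ y, g y ∂μ01 = ∫ y in (0:ℝ)..1, g y := by
  rw [intervalIntegral.integral_of_le zero_le_one]
  exact MeasureTheory.integral_Icc_eq_integral_Ioc

lemma memL2_of_continuousOn {g : ℝ → ℝ} (hg : ContinuousOn g (Icc 0 1)) :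
    MemLp g 2 μ01 := by
  obtain ⟨M, hM⟩ := isCompact_Icc.exists_bound_of_continuousOn hg
  exact MemLp.of_bound (hg.aestronglyMeasurable measurableSet_Icc) M
    ((ae_restrict_mem measurableSet_Icc).mono fun x hx => hM x hx)

lemma exists_Ioo_subset {x₀ δ : ℝ} (hx : x₀ ∈ Icc (0:ℝ) 1) (hδ : 0 < δ) :
    ∃ a c : ℝ, a < c ∧ Ioo a c ⊆ Icc (0:ℝ) 1 ∩ Metric.ball x₀ δ := by
  refine ⟨max 0 (x₀ - δ), min 1 (x₀ + δ), ?_, ?_⟩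
  · rcases hx with ⟨h0, h1⟩
    simp only [max_lt_iff, lt_min_iff]
    exact ⟨⟨zero_lt_one, by linarith⟩, ⟨by linarith, by linarith⟩⟩
  · intro x hx'
    simp only [mem_Ioo, max_lt_iff, lt_min_iff] at hx'
    obtain ⟨⟨h1, h2⟩, h3, h4⟩ := hx'
    refine ⟨⟨le_of_lt h1, le_of_lt h3⟩, ?_⟩
    rw [Metric.mem_ball, Real.dist_eq, abs_lt]
    constructor <;> linarith

lemma eq_zero_of_ae_zero {g : ℝ → ℝ} (hg : ContinuousOn g (Icc 0 1))
    (h : g =ᵐ[μ01] 0) : ∀ x ∈ Icc (0:ℝ) 1, g x = 0 := by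
  intro x₀ hx₀
  by_contra hne
  have hpos : 0 < |g x₀| := abs_pos.mpr hne
  have hcont := hg x₀ hx₀
  rw [ContinuousWithinAt, Metric.tendsto_nhdsWithin_nhds] at hcont
  obtain ⟨δ, hδ, hball⟩ := hcont (|g x₀| / 2) (by linarith)
  obtain ⟨a, c, hac, hsub⟩ := exists_Ioo_subset hx₀ hδ
  have hzero : μ01 {x | g x ≠ 0} = 0 := by
    rw [Filter.EventuallyEq, ae_iff] at h
    simpa using h
  have hsub2 : Ioo a c ⊆ {x | g x ≠ 0} := by
    intro x hx
    obtain ⟨hxI, hxb⟩ := hsub hx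
    have := hball hxI (by simpa [Real.dist_eq] using hxb)
    rw [Real.dist_eq] at this
    simp only [mem_setOf_eq]
    intro h0
    rw [h0] at this
    rw [abs_sub_comm, sub_zero] at this
    linarith
  have hnull : μ01 (Ioo a c) = 0 := measure_mono_null hsub2 hzero
  have hIoo : μ01 (Ioo a c) = ENNReal.ofReal (c - a) := by
    rw [μ01, Measure.restrict_apply measurableSet_Ioo]
    have : Ioo a c ∩ Icc 0 1 = Ioo a c := inter_eq_left.mpr fun x hx => (hsub hx).1
    rw [this, Real.volume_Ioo]
  rw [hIoo] at hnull
  simp only [ENNReal.ofReal_eq_zero] at hnull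
  linarith

lemma inner_eq_integral (g h : Lp ℝ 2 μ01) (G H : ℝ → ℝ)
    (hg : (g : ℝ → ℝ) =ᵐ[μ01] G) (hh : (h : ℝ → ℝ) =ᵐ[μ01] H) :
    ⟪g, h⟫_ℝ = ∫ y, G y * H y ∂μ01 := by
  rw [MeasureTheory.L2.inner_def]
  refine integral_congr_ae ?_
  filter_upwards [hg, hh] with y h1 h2
  simp [h1, h2, RCLike.inner_apply, mul_comm]

lemma prod_eq : μ01.prod μ01 = (volume.prod volume).restrict ((Icc (0:ℝ) 1) ×ˢ (Icc (0:ℝ) 1)) :=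
  Measure.prod_restrict _ _

lemma ae_prod_mem : ∀ᵐ z ∂(μ01.prod μ01), z ∈ (Icc (0:ℝ) 1) ×ˢ (Icc (0:ℝ) 1) := by
  rw [prod_eq]
  exact ae_restrict_mem (measurableSet_Icc.prod measurableSet_Icc)

lemma K_aesm {K : ℝ → ℝ → ℝ}
    (hK : ContinuousOn (fun p : ℝ × ℝ => K p.1 p.2) (Icc 0 1 ×ˢ Icc 0 1)) :
    AEStronglyMeasurable (fun z : ℝ × ℝ => K z.1 z.2) (μ01.prod μ01) := by
  rw [prod_eq]
  exact hK.aestronglyMeasurable (measurableSet_Icc.prod measurableSet_Icc)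

lemma Kx_contOn {K : ℝ → ℝ → ℝ}
    (hK : ContinuousOn (fun p : ℝ × ℝ => K p.1 p.2) (Icc 0 1 ×ˢ Icc 0 1))
    {x : ℝ} (hx : x ∈ Icc (0:ℝ) 1) : ContinuousOn (fun y => K x y) (Icc 0 1) := by
  have : ContinuousOn (fun y : ℝ => ((x, y) : ℝ × ℝ)) (Icc 0 1) :=
    (continuous_const.prodMk continuous_id).continuousOn
  exact hK.comp this fun y hy => ⟨hx, hy⟩

/-- The key Fubini computation: for bounded measurable `g`,
`∫ x, (∫ y, K x y * g y ∂μ01) * f k x ∂μ01 = lam k * ∫ y, g y * f k y ∂μ01`. -/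
lemma fubini_eig {K : ℝ → ℝ → ℝ}
    (hK : ContinuousOn (fun p : ℝ × ℝ => K p.1 p.2) (Icc 0 1 ×ˢ Icc 0 1))
    (hsymm : ∀ x ∈ Icc (0:ℝ) 1, ∀ y ∈ Icc (0:ℝ) 1, K x y = K y x)
    {fk : ℝ → ℝ} (hfk : ContinuousOn fk (Icc 0 1))
    {lamk : ℝ} (heigk : ∀ x ∈ Icc (0:ℝ) 1, (∫ y, K x y * fk y ∂μ01) = lamk * fk x)
    {g : ℝ → ℝ} (hg : AEStronglyMeasurable g μ01) (hgb : ∀ y, |g y| ≤ 1) :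
    ∫ x, (∫ y, K x y * g y ∂μ01) * fk x ∂μ01 = lamk * ∫ y, g y * fk y ∂μ01 := by
  obtain ⟨MK, hMK⟩ := (isCompact_Icc.prod isCompact_Icc).exists_bound_of_continuousOn hK
  obtain ⟨Mf, hMf⟩ := isCompact_Icc.exists_bound_of_continuousOn hfk
  have hswap : ∫ x, ∫ y, K x y * g y * fk x ∂μ01 ∂μ01
      = ∫ y, ∫ x, K x y * g y * fk x ∂μ01 ∂μ01 := by
    refine integral_integral_swap ?_
    refine Integrable.mono' (integrable_const (MK * 1 * Mf)) ?_ ?_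
    · exact ((K_aesm hK).mul hg.comp_snd).mul ((hfk.aestronglyMeasurable measurableSet_Icc).comp_fst)
    · filter_upwards [ae_prod_mem] with z hz
      have hK' := hMK z hz
      obtain ⟨h1, h2⟩ := hz
      have hMK0 : (0:ℝ) ≤ MK := (norm_nonneg _).trans hK'
      simp only [Function.uncurry, norm_mul, Real.norm_eq_abs]
      refine mul_le_mul (mul_le_mul hK' (hgb z.2) (abs_nonneg _) hMK0) (hMf z.1 h1)
        (abs_nonneg _) (by simpa using hMK0)
  calc ∫ x, (∫ y, K x y * g y ∂μ01) * fk x ∂μ01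
      = ∫ x, ∫ y, K x y * g y * fk x ∂μ01 ∂μ01 := by
        refine integral_congr_ae (ae_of_all _ fun x => ?_)
        simp only []
        rw [← integral_mul_const (fk x) (fun y => K x y * g y)]
    _ = ∫ y, ∫ x, K x y * g y * fk x ∂μ01 ∂μ01 := hswap
    _ = ∫ y, g y * (lamk * fk y) ∂μ01 := by
        refine integral_congr_ae ?_
        filter_upwards [ae_restrict_mem measurableSet_Icc] with y hy
        have : (fun x => K x y * g y * fk x) = fun x => g y * (K x y * fk x) := by
          funext x; ring
        rw [this, integral_const_mul]
        congr 1
        have : ∫ x, K x y * fk x ∂μ01 = ∫ x, K y x * fk x ∂μ01 := by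
          refine integral_congr_ae ?_
          filter_upwards [ae_restrict_mem measurableSet_Icc] with x hx
          rw [hsymm x hx y hy]
        rw [this, heigk y hy]
    _ = lamk * ∫ y, g y * fk y ∂μ01 := by
        rw [← integral_const_mul]
        refine integral_congr_ae (ae_of_all _ fun y => ?_)
        ring

lemma indicator_mul_eq {U : Set ℝ} (F : ℝ → ℝ) :
    (fun x => F x * U.indicator (fun _ => (1:ℝ)) x) = U.indicator F := by
  funext x
  by_cases hx : x ∈ U <;> simp [hx]

lemma stepA (K : ℝ → ℝ → ℝ)
    (hK : ContinuousOn (fun p : ℝ × ℝ => K p.1 p.2) (Icc 0 1 ×ˢ Icc 0 1))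
    (hsymm : ∀ x ∈ Icc (0:ℝ) 1, ∀ y ∈ Icc (0:ℝ) 1, K x y = K y x)
    (f : ℕ → ℝ → ℝ) (hf : ∀ k, ContinuousOn (f k) (Icc 0 1))
    (b : HilbertBasis ℕ ℝ (Lp ℝ 2 μ01))
    (hb : ∀ k, (b k : ℝ → ℝ) =ᵐ[μ01] f k)
    (lam : ℕ → ℝ) (hlam : ∀ k, 0 ≤ lam k)
    (heig : ∀ k, ∀ x ∈ Icc (0:ℝ) 1, (∫ y, K x y * f k y ∂μ01) = lam k * f k x)
    (n : ℕ) : ∀ x₀ ∈ Icc (0:ℝ) 1,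
      ∑ k ∈ Finset.range n, lam k * (f k x₀)^2 ≤ K x₀ x₀ := by
  intro x₀ hx₀
  by_contra hlt
  push_neg at hlt
  -- the truncated kernel
  set r : ℝ × ℝ → ℝ :=
    fun p => K p.1 p.2 - ∑ k ∈ Finset.range n, lam k * f k p.1 * f k p.2 with hr_def
  have hr_cont : ContinuousOn r (Icc 0 1 ×ˢ Icc 0 1) := by
    refine hK.sub (continuousOn_finset_sum _ fun k _ => ?_)
    have h1 : ContinuousOn (fun p : ℝ × ℝ => f k p.1) (Icc 0 1 ×ˢ Icc 0 1) :=
      (hf k).comp continuous_fst.continuousOn fun p hp => hp.1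
    have h2 : ContinuousOn (fun p : ℝ × ℝ => f k p.2) (Icc 0 1 ×ˢ Icc 0 1) :=
      (hf k).comp continuous_snd.continuousOn fun p hp => hp.2
    exact (continuousOn_const.mul h1).mul h2
  set ε : ℝ := -(r (x₀, x₀)) with hε_def
  have hε : 0 < ε := by
    simp only [hε_def, hr_def]
    have : ∑ k ∈ Finset.range n, lam k * f k x₀ * f k x₀
        = ∑ k ∈ Finset.range n, lam k * (f k x₀)^2 := by
      refine Finset.sum_congr rfl fun k _ => by ring
    simp only [this]
    linarith
  -- neighborhood on which r < -ε/2
  have hc := hr_cont (x₀, x₀) ⟨hx₀, hx₀⟩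
  rw [ContinuousWithinAt, Metric.tendsto_nhdsWithin_nhds] at hc
  obtain ⟨δ, hδ, hball⟩ := hc (ε/2) (half_pos hε)
  obtain ⟨a, c, hac, hsub⟩ := exists_Ioo_subset hx₀ hδ
  set U : Set ℝ := Ioo a c with hU_def
  have hUsub : U ⊆ Icc 0 1 := fun x hx => (hsub hx).1
  have hrU : ∀ x ∈ U, ∀ y ∈ U, r (x, y) ≤ -(ε/2) := by
    intro x hx y hy
    have hxm := hsub hx
    have hym := hsub hy
    have hd : dist ((x,y) : ℝ × ℝ) (x₀, x₀) < δ := by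
      rw [Prod.dist_eq]
      exact max_lt (Metric.mem_ball.mp hxm.2) (Metric.mem_ball.mp hym.2)
    have := hball (Set.mk_mem_prod hxm.1 hym.1) hd
    rw [Real.dist_eq, abs_lt] at this
    have h2 := this.2
    try simp only [← hε_def] at h2 ⊢
    linarith [this.1, this.2]
  -- the indicator test function
  set g : ℝ → ℝ := U.indicator (fun _ => (1:ℝ)) with hg_def
  have hg_aesm : AEStronglyMeasurable g μ01 :=
    (measurable_const.indicator measurableSet_Ioo).aestronglyMeasurable
  have hgb : ∀ y, |g y| ≤ 1 := by
    intro y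
    by_cases hy : y ∈ U <;> simp [hg_def, hy]
  have hgL2 : MemLp g 2 μ01 :=
    MemLp.of_bound hg_aesm 1 (ae_of_all _ fun y => by simpa using hgb y)
  set G : Lp ℝ 2 μ01 := hgL2.toLp g with hG_def
  obtain ⟨MK, hMK⟩ := (isCompact_Icc.prod isCompact_Icc).exists_bound_of_continuousOn hK
  -- the transformed test function
  set Tr : ℝ → ℝ := fun x => ∫ y, K x y * g y ∂μ01 with hTr_def
  have hTr_aesm : AEStronglyMeasurable Tr μ01 :=
    AEStronglyMeasurable.integral_prod_right' ((K_aesm hK).mul hg_aesm.comp_snd)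
  have hTr_bd : ∀ᵐ x ∂μ01, ‖Tr x‖ ≤ MK * 1 := by
    filter_upwards [ae_restrict_mem measurableSet_Icc] with x hx
    have : ‖Tr x‖ ≤ MK * (μ01 univ).toReal := by
      refine norm_integral_le_of_norm_le_const ?_
      filter_upwards [ae_restrict_mem measurableSet_Icc] with y hy
      have h1 : |K x y| ≤ MK := by simpa [Real.norm_eq_abs] using hMK (x, y) ⟨hx, hy⟩
      have hMK0 : (0:ℝ) ≤ MK := (abs_nonneg _).trans h1
      calc ‖K x y * g y‖ = |K x y| * |g y| := by rw [Real.norm_eq_abs, abs_mul]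
        _ ≤ MK * 1 := mul_le_mul h1 (hgb y) (abs_nonneg _) hMK0
        _ = MK := mul_one MK
    rwa [meas_univ] at this
  have hTrL2 : MemLp Tr 2 μ01 := MemLp.of_bound hTr_aesm (MK * 1) hTr_bd
  set TG : Lp ℝ 2 μ01 := hTrL2.toLp Tr with hTG_def
  set ck : ℕ → ℝ := fun k => ∫ y, g y * f k y ∂μ01 with hck_def
  have h1 : ∀ k, ⟪G, b k⟫_ℝ = ck k := fun k =>
    inner_eq_integral G (b k) g (f k) hgL2.coeFn_toLp (hb k)
  have h2 : ∀ k, ⟪TG, b k⟫_ℝ = lam k * ck k := by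
    intro k
    rw [inner_eq_integral TG (b k) Tr (f k) hTrL2.coeFn_toLp (hb k)]
    exact fubini_eig hK hsymm (hf k) (heig k) hg_aesm hgb
  have h3 : ⟪TG, G⟫_ℝ = ∫ x, Tr x * g x ∂μ01 :=
    inner_eq_integral TG G Tr g hTrL2.coeFn_toLp hgL2.coeFn_toLp
  have hPar : HasSum (fun k => lam k * ck k * ck k) (∫ x, Tr x * g x ∂μ01) := by
    have := b.hasSum_inner_mul_inner TG G
    rw [h3] at this
    refine this.congr_fun fun k => ?_
    rw [h2 k]
    congr 1
    rw [real_inner_comm]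
    exact (h1 k).symm
  have hfin : ∑ k ∈ Finset.range n, lam k * ck k * ck k ≤ ∫ x, Tr x * g x ∂μ01 := by
    refine sum_le_hasSum _ (fun k _ => ?_) hPar
    rw [mul_assoc]
    exact mul_nonneg (hlam k) (mul_self_nonneg _)
  -- rewrite everything as set integrals over U w.r.t. volume
  have hres : μ01.restrict U = volume.restrict U := by
    rw [μ01, Measure.restrict_restrict measurableSet_Ioo, inter_eq_left.mpr hUsub]
  have hTr_eq : ∀ x, Tr x = ∫ y in U, K x y := by
    intro x
    rw [hTr_def]
    simp only []
    rw [indicator_mul_eq (fun y => K x y), integral_indicator measurableSet_Ioo, hres]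
  have hint_eq : ∫ x, Tr x * g x ∂μ01 = ∫ x in U, Tr x := by
    rw [indicator_mul_eq Tr, integral_indicator measurableSet_Ioo, hres]
  have hck_eq : ∀ k, ck k = ∫ y in U, f k y := by
    intro k
    rw [hck_def]
    simp only []
    have : (fun y => g y * f k y) = fun y => f k y * g y := by funext y; ring
    rw [this, indicator_mul_eq (f k), integral_indicator measurableSet_Ioo, hres]
  -- integrability facts on U
  have hKi : ∀ x ∈ Icc (0:ℝ) 1, IntegrableOn (fun y => K x y) U volume :=
    fun x hx => ((Kx_contOn hK hx).integrableOn_Icc).mono_set hUsub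
  have hfi : ∀ k, IntegrableOn (f k) U volume :=
    fun k => ((hf k).integrableOn_Icc).mono_set hUsub
  -- inner integral identity
  have hinner : ∀ x ∈ Icc (0:ℝ) 1, ∫ y in U, r (x, y)
      = Tr x - ∑ k ∈ Finset.range n, lam k * f k x * ck k := by
    intro x hx
    have hsum_int : IntegrableOn (fun y => ∑ k ∈ Finset.range n, lam k * f k x * f k y) U volume := by
      refine integrable_finset_sum _ fun k _ => ?_
      exact (hfi k).const_mul (lam k * f k x)
    rw [hr_def]
    simp only []
    rw [integral_sub (hKi x hx) hsum_int, integral_finset_sum _ (fun k _ => (hfi k).const_mul (lam k * f k x))]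
    rw [hTr_eq x]
    congr 1
    refine Finset.sum_congr rfl fun k _ => ?_
    rw [hck_eq k, ← integral_const_mul]
  -- integrability of Tr and the sum on U
  have hTr_aesmU : AEStronglyMeasurable Tr (volume.restrict U) := by
    have := hTr_aesm.restrict (s := U)
    rwa [hres] at this
  have hTr_bdU : ∀ᵐ x ∂(volume.restrict U), ‖Tr x‖ ≤ MK * 1 := by
    have := ae_restrict_of_ae (s := U) hTr_bd
    rwa [hres] at this
  have hTrU_int : IntegrableOn Tr U volume :=
    Integrable.mono' (integrable_const (MK * 1)) hTr_aesmU hTr_bdU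
  have hSint : IntegrableOn (fun x => ∑ k ∈ Finset.range n, lam k * f k x * ck k) U volume := by
    refine integrable_finset_sum _ fun k _ => ?_
    exact ((hfi k).const_mul (lam k)).mul_const (ck k)
  have hUconst : ∀ C : ℝ, IntegrableOn (fun _ => C) U volume :=
    fun C => integrableOn_const measure_Ioo_lt_top.ne
  have hvol : (volume U).toReal = c - a := by
    rw [hU_def, Real.volume_Ioo, ENNReal.toReal_ofReal (sub_nonneg.mpr hac.le)]
  have hinner_eqOn : EqOn (fun x => ∫ y in U, r (x, y))
      (fun x => Tr x - ∑ k ∈ Finset.range n, lam k * f k x * ck k) U :=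
    fun x hx => hinner x (hUsub hx)
  have hQ1 : ∫ x in U, (∫ y in U, r (x, y))
      = (∫ x in U, Tr x) - ∑ k ∈ Finset.range n, lam k * ck k * ck k := by
    rw [setIntegral_congr_fun measurableSet_Ioo hinner_eqOn,
      integral_sub hTrU_int hSint,
      integral_finset_sum _ (fun k _ => ((hfi k).const_mul (lam k)).mul_const (ck k))]
    congr 1
    refine Finset.sum_congr rfl fun k _ => ?_
    have hstep : ∫ x in U, lam k * f k x * ck k
        = (lam k * ∫ x in U, f k x) * ck k := by
      rw [integral_mul_const, integral_const_mul]
    rw [hstep, ← hck_eq k]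
  have hinner_le : ∀ x ∈ U, (∫ y in U, r (x, y)) ≤ (c - a) * (-(ε/2)) := by
    intro x hx
    have hrint : IntegrableOn (fun y => r (x, y)) U volume := by
      have h2 : IntegrableOn (fun y => ∑ k ∈ Finset.range n, lam k * f k x * f k y) U volume :=
        integrable_finset_sum _ fun k _ => (hfi k).const_mul (lam k * f k x)
      exact (hKi x (hUsub hx)).sub h2
    have := setIntegral_mono_on hrint (hUconst (-(ε/2))) measurableSet_Ioo
      (fun y hy => hrU x hx y hy)
    rwa [setIntegral_const, measureReal_def, hvol, smul_eq_mul] at this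
  have hQ2 : ∫ x in U, (∫ y in U, r (x, y)) ≤ (c - a) * ((c - a) * (-(ε/2))) := by
    rw [setIntegral_congr_fun measurableSet_Ioo hinner_eqOn]
    have hmono := setIntegral_mono_on
      (f := fun x => Tr x - ∑ k ∈ Finset.range n, lam k * f k x * ck k)
      (g := fun _ => (c - a) * (-(ε/2)))
      (hTrU_int.sub hSint) (hUconst _) measurableSet_Ioo (fun x hx => by
        have h := (hinner x (hUsub hx)).symm.trans_le (hinner_le x hx)
        simpa using h)
    rw [setIntegral_const, measureReal_def, hvol, smul_eq_mul] at hmono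
    exact hmono
  have hge : (0:ℝ) ≤ ∫ x in U, (∫ y in U, r (x, y)) := by
    rw [hQ1]
    rw [hint_eq] at hfin
    linarith
  have hca : 0 < c - a := sub_pos.mpr hac
  have hkey : (c - a) * ((c - a) * -(ε / 2)) < 0 := by
    have h1 : 0 < (c - a) * ((c - a) * (ε / 2)) := mul_pos hca (mul_pos hca (half_pos hε))
    have h2 : (c - a) * ((c - a) * -(ε / 2)) = -((c - a) * ((c - a) * (ε / 2))) := by ring
    linarith
  linarith [hge.trans hQ2, hkey]

lemma abs_sum_le_sqrt_mul_sqrt (s : Finset ℕ) (lam : ℕ → ℝ) (hlam : ∀ k, 0 ≤ lam k)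
    (u v : ℕ → ℝ) :
    |∑ k ∈ s, lam k * u k * v k|
      ≤ Real.sqrt (∑ k ∈ s, lam k * u k ^ 2) * Real.sqrt (∑ k ∈ s, lam k * v k ^ 2) := by
  have h1 : ∀ k, lam k * u k * v k = (Real.sqrt (lam k) * u k) * (Real.sqrt (lam k) * v k) :=
    fun k => by rw [mul_mul_mul_comm, Real.mul_self_sqrt (hlam k), mul_assoc]
  have h2 : ∀ w : ℕ → ℝ, ∑ k ∈ s, lam k * w k ^ 2 = ∑ k ∈ s, (Real.sqrt (lam k) * w k) ^ 2 :=
    fun w => Finset.sum_congr rfl fun k _ => by rw [mul_pow, Real.sq_sqrt (hlam k)]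
  have hsq : (∑ k ∈ s, lam k * u k * v k) ^ 2
      ≤ (∑ k ∈ s, lam k * u k ^ 2) * (∑ k ∈ s, lam k * v k ^ 2) := by
    rw [Finset.sum_congr rfl fun k _ => h1 k, h2 u, h2 v]
    exact Finset.sum_mul_sq_le_sq_mul_sq s _ _
  have hnn : 0 ≤ ∑ k ∈ s, lam k * u k ^ 2 :=
    Finset.sum_nonneg fun k _ => mul_nonneg (hlam k) (sq_nonneg _)
  calc |∑ k ∈ s, lam k * u k * v k| = Real.sqrt ((∑ k ∈ s, lam k * u k * v k) ^ 2) :=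
        (Real.sqrt_sq_eq_abs _).symm
    _ ≤ Real.sqrt ((∑ k ∈ s, lam k * u k ^ 2) * (∑ k ∈ s, lam k * v k ^ 2)) :=
        Real.sqrt_le_sqrt hsq
    _ = _ := Real.sqrt_mul hnn _

lemma stepB (K : ℝ → ℝ → ℝ)
    (hK : ContinuousOn (fun p : ℝ × ℝ => K p.1 p.2) (Icc 0 1 ×ˢ Icc 0 1))
    (hsymm : ∀ x ∈ Icc (0:ℝ) 1, ∀ y ∈ Icc (0:ℝ) 1, K x y = K y x)
    (f : ℕ → ℝ → ℝ) (hf : ∀ k, ContinuousOn (f k) (Icc 0 1))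
    (b : HilbertBasis ℕ ℝ (Lp ℝ 2 μ01))
    (hb : ∀ k, (b k : ℝ → ℝ) =ᵐ[μ01] f k)
    (lam : ℕ → ℝ) (hlam : ∀ k, 0 ≤ lam k)
    (heig : ∀ k, ∀ x ∈ Icc (0:ℝ) 1, (∫ y, K x y * f k y ∂μ01) = lam k * f k x)
    {x : ℝ} (hx : x ∈ Icc (0:ℝ) 1) :
    HasSum (fun k => lam k * (f k x)^2) (K x x) := by
  obtain ⟨MK, hMK⟩ := (isCompact_Icc.prod isCompact_Icc).exists_bound_of_continuousOn hK
  have hMK0 : (0:ℝ) ≤ MK := (norm_nonneg _).trans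
    (hMK ((0:ℝ), (0:ℝ)) ⟨⟨le_refl 0, zero_le_one⟩, ⟨le_refl 0, zero_le_one⟩⟩)
  have hMK' : ∀ z ∈ Icc (0:ℝ) 1, ∀ w ∈ Icc (0:ℝ) 1, K z w ≤ MK := fun z hz w hw =>
    (le_abs_self _).trans (by simpa [Real.norm_eq_abs] using hMK (z, w) ⟨hz, hw⟩)
  have hA := stepA K hK hsymm f hf b hb lam hlam heig
  have hbound : ∀ z ∈ Icc (0:ℝ) 1, ∀ n, ∑ k ∈ Finset.range n, lam k * (f k z)^2 ≤ MK :=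
    fun z hz n => (hA n z hz).trans (hMK' z hz z hz)
  have hsum_sq : ∀ z ∈ Icc (0:ℝ) 1, Summable (fun k => lam k * (f k z)^2) :=
    fun z hz => summable_of_sum_range_le
      (fun k => mul_nonneg (hlam k) (sq_nonneg _)) (hbound z hz)
  -- partial sums S n and pointwise limit H
  set S : ℕ → ℝ → ℝ := fun n y => ∑ k ∈ Finset.range n, lam k * f k x * f k y with hS_def
  have habs : ∀ y ∈ Icc (0:ℝ) 1, Summable (fun k => lam k * f k x * f k y) := by
    intro y hy
    refine Summable.of_abs ?_
    refine Summable.of_nonneg_of_le (fun k => abs_nonneg _) (fun k => ?_)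
      ((((hsum_sq x hx).add (hsum_sq y hy)).div_const 2))
    have h1 : |lam k * f k x * f k y| = lam k * (|f k x| * |f k y|) := by
      rw [abs_mul, abs_mul, abs_of_nonneg (hlam k), mul_assoc]
    rw [h1]
    have h2 : |f k x| * |f k y| ≤ (f k x ^ 2 + f k y ^ 2) / 2 := by
      nlinarith [two_mul_le_add_sq (|f k x|) (|f k y|), sq_abs (f k x), sq_abs (f k y)]
    calc lam k * (|f k x| * |f k y|)
        ≤ lam k * ((f k x ^ 2 + f k y ^ 2) / 2) := mul_le_mul_of_nonneg_left h2 (hlam k)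
      _ = (lam k * f k x ^ 2 + lam k * f k y ^ 2) / 2 := by ring
  set H : ℝ → ℝ := fun y => ∑' k, lam k * f k x * f k y with hH_def
  -- sums over finsets of the diagonal series are bounded by MK
  have hfin_bd : ∀ z ∈ Icc (0:ℝ) 1, ∀ s : Finset ℕ, ∑ k ∈ s, lam k * (f k z)^2 ≤ MK := by
    intro z hz s
    obtain ⟨n, hn⟩ := s.exists_nat_subset_range
    refine le_trans (Finset.sum_le_sum_of_subset_of_nonneg hn
      (fun k _ _ => mul_nonneg (hlam k) (sq_nonneg _))) (hbound z hz n)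
  -- uniform Cauchy
  have hUC : UniformCauchySeqOn S atTop (Icc 0 1) := by
    rw [Metric.uniformCauchySeqOn_iff]
    intro ε hε
    set θ : ℝ := (ε / (Real.sqrt MK + 1))^2 with hθ_def
    have hden : (0:ℝ) < Real.sqrt MK + 1 := by positivity
    have hθ : 0 < θ := by positivity
    have hcau := (Metric.cauchySeq_iff.mp
      ((habs x hx).hasSum.tendsto_sum_nat.cauchySeq : CauchySeq
        (fun n => ∑ k ∈ Finset.range n, lam k * f k x * f k x)))
    clear hcau
    have hcx : CauchySeq (fun n => ∑ k ∈ Finset.range n, lam k * (f k x)^2) :=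
      ((hsum_sq x hx).hasSum.tendsto_sum_nat).cauchySeq
    obtain ⟨N, hN⟩ := Metric.cauchySeq_iff.mp hcx θ hθ
    refine ⟨N, fun m hm n hn y hy => ?_⟩
    -- wlog m ≤ n via abs symmetry
    have key : ∀ p q : ℕ, N ≤ p → N ≤ q → p ≤ q → dist (S p y) (S q y) < ε := by
      intro p q hp hq hpq
      rw [Real.dist_eq]
      have hIco : S q y - S p y = ∑ k ∈ Finset.Ico p q, lam k * f k x * f k y := by
        rw [hS_def]
        simp only []
        rw [Finset.sum_Ico_eq_sub _ hpq]
      rw [abs_sub_comm, hIco]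
      have hCS := abs_sum_le_sqrt_mul_sqrt (Finset.Ico p q) lam hlam
        (fun k => f k x) (fun k => f k y)
      have hx_tail : ∑ k ∈ Finset.Ico p q, lam k * (f k x)^2 < θ := by
        have := hN q hq p hp
        rw [Real.dist_eq] at this
        have heq : ∑ k ∈ Finset.Ico p q, lam k * (f k x)^2
            = (∑ k ∈ Finset.range q, lam k * (f k x)^2)
              - ∑ k ∈ Finset.range p, lam k * (f k x)^2 :=
          Finset.sum_Ico_eq_sub _ hpq
        rw [heq]
        calc (∑ k ∈ Finset.range q, lam k * (f k x)^2)
              - ∑ k ∈ Finset.range p, lam k * (f k x)^2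
            ≤ |(∑ k ∈ Finset.range q, lam k * (f k x)^2)
              - ∑ k ∈ Finset.range p, lam k * (f k x)^2| := le_abs_self _
          _ < θ := this
      have hy_tail : ∑ k ∈ Finset.Ico p q, lam k * (f k y)^2 ≤ MK := hfin_bd y hy _
      have h1 : Real.sqrt (∑ k ∈ Finset.Ico p q, lam k * (f k x)^2)
          ≤ Real.sqrt θ := Real.sqrt_le_sqrt hx_tail.le
      have h2 : Real.sqrt (∑ k ∈ Finset.Ico p q, lam k * (f k y)^2)
          ≤ Real.sqrt MK := Real.sqrt_le_sqrt hy_tail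
      have hsqθ : Real.sqrt θ = ε / (Real.sqrt MK + 1) := by
        rw [hθ_def, Real.sqrt_sq (le_of_lt (div_pos hε hden))]
      have hfinal : Real.sqrt (∑ k ∈ Finset.Ico p q, lam k * (f k x)^2)
            * Real.sqrt (∑ k ∈ Finset.Ico p q, lam k * (f k y)^2)
          ≤ (ε / (Real.sqrt MK + 1)) * Real.sqrt MK := by
        refine mul_le_mul (hsqθ ▸ h1) h2 (Real.sqrt_nonneg _) (by positivity)
      refine lt_of_le_of_lt (hCS.trans hfinal) ?_
      rw [div_mul_eq_mul_div, div_lt_iff₀ hden]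
      have hMKs : (0:ℝ) ≤ Real.sqrt MK := Real.sqrt_nonneg _
      nlinarith
    rcases le_total m n with h | h
    · exact key m n hm hn h
    · rw [dist_comm]; exact key n m hn hm h
  have hS_tendsto : ∀ y ∈ Icc (0:ℝ) 1, Filter.Tendsto (fun n => S n y) atTop (nhds (H y)) :=
    fun y hy => (habs y hy).hasSum.tendsto_sum_nat
  have hTU : TendstoUniformlyOn S H atTop (Icc 0 1) :=
    hUC.tendstoUniformlyOn_of_tendsto hS_tendsto
  have hS_cont : ∀ n : ℕ, ContinuousOn (S n) (Icc 0 1) :=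
    fun n => continuousOn_finset_sum _ fun k _ => continuousOn_const.mul (hf k)
  have hH_cont : ContinuousOn H (Icc 0 1) :=
    hTU.continuousOn (Filter.Eventually.of_forall hS_cont).frequently
  -- uniform bound on S n over Icc
  have hS_bd : ∀ n : ℕ, ∀ y ∈ Icc (0:ℝ) 1, |S n y| ≤ Real.sqrt MK * Real.sqrt MK := by
    intro n y hy
    have hCS := abs_sum_le_sqrt_mul_sqrt (Finset.range n) lam hlam
      (fun k => f k x) (fun k => f k y)
    refine hCS.trans (mul_le_mul (Real.sqrt_le_sqrt (hbound x hx n))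
      (Real.sqrt_le_sqrt (hbound y hy n)) (Real.sqrt_nonneg _) (Real.sqrt_nonneg _))
  -- orthonormality
  have ortho : ∀ k j : ℕ, ∫ y, f k y * f j y ∂μ01 = if k = j then 1 else 0 := by
    intro k j
    rw [← inner_eq_integral (b k) (b j) (f k) (f j) (hb k) (hb j)]
    have := b.orthonormal
    rw [orthonormal_iff_ite] at this
    exact this k j
  have hfj_int : ∀ k j : ℕ, Integrable (fun y => f k y * f j y) μ01 :=
    fun k j => ((hf k).mul (hf j)).integrableOn_Icc
  -- coefficients of H
  have hHcoef : ∀ j, ∫ y, H y * f j y ∂μ01 = lam j * f j x := by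
    intro j
    obtain ⟨Mj, hMj⟩ := isCompact_Icc.exists_bound_of_continuousOn (hf j)
    have hDCT := MeasureTheory.tendsto_integral_of_dominated_convergence
      (μ := μ01) (F := fun n y => S n y * f j y) (f := fun y => H y * f j y)
      (bound := fun _ => Real.sqrt MK * Real.sqrt MK * Mj)
      (fun n => (((hS_cont n).mul (hf j)).aestronglyMeasurable measurableSet_Icc))
      (integrable_const _)
      (fun n => by
        filter_upwards [ae_restrict_mem measurableSet_Icc] with y hy
        have h1 := hS_bd n y hy
        have h2 : |f j y| ≤ Mj := by
          simpa [Real.norm_eq_abs] using hMj y hy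
        have h3 : (0:ℝ) ≤ Mj := (abs_nonneg _).trans h2
        rw [Real.norm_eq_abs, abs_mul]
        exact mul_le_mul h1 h2 (abs_nonneg _) (by positivity))
      (by
        filter_upwards [ae_restrict_mem measurableSet_Icc] with y hy
        exact (hS_tendsto y hy).mul_const (f j y))
    -- explicit value of ∫ S n * f j
    have hval : ∀ n, ∫ y, S n y * f j y ∂μ01
        = ∑ k ∈ Finset.range n, (if k = j then lam k * f k x else 0) := by
      intro n
      have hrw : (fun y => S n y * f j y)
          = fun y => ∑ k ∈ Finset.range n, (lam k * f k x) * (f k y * f j y) := by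
        funext y
        rw [hS_def]
        simp only []
        rw [Finset.sum_mul]
        exact Finset.sum_congr rfl fun k _ => by ring
      rw [hrw, integral_finset_sum _ (fun k _ => (hfj_int k j).const_mul (lam k * f k x))]
      refine Finset.sum_congr rfl fun k _ => ?_
      rw [integral_const_mul, ortho k j]
      by_cases h : k = j <;> simp [h]
    have hconst : Filter.Tendsto (fun n => ∫ y, S n y * f j y ∂μ01) atTop
        (nhds (lam j * f j x)) := by
      rw [show (fun n => ∫ y, S n y * f j y ∂μ01)
          = fun n => ∑ k ∈ Finset.range n, (if k = j then lam k * f k x else 0) from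
        funext hval]
      have : ∀ n, j + 1 ≤ n → ∑ k ∈ Finset.range n, (if k = j then lam k * f k x else 0)
          = lam j * f j x := by
        intro n hn
        rw [Finset.sum_ite_eq' (Finset.range n) j (fun k => lam k * f k x)]
        simp [Finset.mem_range, Nat.lt_of_succ_le hn]
      refine Filter.Tendsto.congr' ?_ tendsto_const_nhds
      filter_upwards [Filter.eventually_ge_atTop (j + 1)] with n hn
      exact (this n hn).symm
    exact tendsto_nhds_unique hDCT hconst
  -- K x · and H have equal Fourier coefficients, hence equal a.e., hence equal on Icc
  have hKx_cont := Kx_contOn hK hx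
  have hKxL2 : MemLp (fun y => K x y) 2 μ01 := memL2_of_continuousOn hKx_cont
  have hHL2 : MemLp H 2 μ01 := memL2_of_continuousOn hH_cont
  set KX : Lp ℝ 2 μ01 := hKxL2.toLp _ with hKX_def
  set HX : Lp ℝ 2 μ01 := hHL2.toLp _ with hHX_def
  have hdiff : ∀ j, ⟪KX - HX, b j⟫_ℝ = 0 := by
    intro j
    rw [inner_sub_left,
      inner_eq_integral KX (b j) (fun y => K x y) (f j) hKxL2.coeFn_toLp (hb j),
      inner_eq_integral HX (b j) H (f j) hHL2.coeFn_toLp (hb j),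
      heig j x hx, hHcoef j, sub_self]
  have hKH : KX = HX := by
    have hP := b.hasSum_inner_mul_inner (KX - HX) (KX - HX)
    have h0 : (fun j => ⟪KX - HX, b j⟫_ℝ * ⟪b j, KX - HX⟫_ℝ) = fun _ => (0:ℝ) :=
      funext fun j => by rw [hdiff j, zero_mul]
    rw [h0] at hP
    have hzero : ⟪KX - HX, KX - HX⟫_ℝ = 0 := hP.unique hasSum_zero
    have := inner_self_eq_zero.mp hzero
    exact sub_eq_zero.mp this
  have hae : (fun y => K x y) =ᵐ[μ01] H := by
    refine hKxL2.coeFn_toLp.symm.trans ?_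
    rw [← hKX_def, hKH, hHX_def]
    exact hHL2.coeFn_toLp
  have heqIcc : ∀ y ∈ Icc (0:ℝ) 1, K x y - H y = 0 := by
    refine eq_zero_of_ae_zero (hKx_cont.sub hH_cont) ?_
    filter_upwards [hae] with y hy
    simp [hy]
  have hKxx : K x x = ∑' k, lam k * f k x * f k x := by
    have := heqIcc x hx
    have hHx : H x = ∑' k, lam k * f k x * f k x := rfl
    linarith [hHx ▸ this]
  have hfinal : HasSum (fun k => lam k * f k x * f k x) (K x x) := by
    rw [hKxx]
    exact (habs x hx).hasSum
  exact hfinal.congr_fun fun k => by ring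

end TFA

/-- Trace formula for a continuous symmetric kernel on `[0,1]` with nonnegative eigenvalues:
if the continuous eigenfunctions `f k` (eigenvalues `lam k ≥ 0`) form a Hilbert basis of
`L²([0,1])`, then `∑ k, lam k` converges to `∫₀¹ K x x dx`. -/
theorem trace_formula (K : ℝ → ℝ → ℝ)
    (hK : ContinuousOn (fun p : ℝ × ℝ => K p.1 p.2) (Icc 0 1 ×ˢ Icc 0 1))
    (hsymm : ∀ x ∈ Icc (0:ℝ) 1, ∀ y ∈ Icc (0:ℝ) 1, K x y = K y x)
    (f : ℕ → ℝ → ℝ) (hf : ∀ k, ContinuousOn (f k) (Icc 0 1))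
    (b : HilbertBasis ℕ ℝ (Lp ℝ 2 (volume.restrict (Icc (0:ℝ) 1))))
    (hb : ∀ k, (b k : ℝ → ℝ) =ᵐ[volume.restrict (Icc (0:ℝ) 1)] f k)
    (lam : ℕ → ℝ) (hlam : ∀ k, 0 ≤ lam k)
    (heig : ∀ k, ∀ x ∈ Icc (0:ℝ) 1, (∫ y in (0:ℝ)..1, K x y * f k y) = lam k * f k x) :
    HasSum lam (∫ x in (0:ℝ)..1, K x x) := by
  have heig' : ∀ k, ∀ x ∈ Icc (0:ℝ) 1,
      (∫ y, K x y * f k y ∂TFA.μ01) = lam k * f k x := by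
    intro k x hx
    rw [TFA.integral_eq_interval]
    exact heig k x hx
  have hBB : ∀ x ∈ Icc (0:ℝ) 1, HasSum (fun k => lam k * (f k x)^2) (K x x) :=
    fun x hx => TFA.stepB K hK hsymm f hf b hb lam hlam heig' hx
  have hdiag : ContinuousOn (fun x => K x x) (Icc 0 1) := by
    have hd : ContinuousOn (fun x : ℝ => ((x, x) : ℝ × ℝ)) (Icc 0 1) :=
      (continuous_id.prodMk continuous_id).continuousOn
    exact hK.comp hd fun x hx => ⟨hx, hx⟩
  have hdiag_int : Integrable (fun x => K x x) TFA.μ01 := hdiag.integrableOn_Icc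
  have ortho : ∀ k, ∫ y, f k y * f k y ∂TFA.μ01 = 1 := by
    intro k
    rw [← TFA.inner_eq_integral (b k) (b k) (f k) (f k) (hb k) (hb k)]
    have hon := b.orthonormal
    rw [orthonormal_iff_ite] at hon
    simpa using hon k k
  have hterm_int : ∀ k : ℕ, Integrable (fun x => lam k * (f k x)^2) TFA.μ01 := by
    intro k
    have h1 : Integrable (fun x => f k x * f k x) TFA.μ01 := ((hf k).mul (hf k)).integrableOn_Icc
    exact (h1.const_mul (lam k)).congr (Filter.Eventually.of_forall fun x => by ring)
  have hSn_int : ∀ n, Integrable (fun x => ∑ k ∈ Finset.range n, lam k * (f k x)^2) TFA.μ01 :=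
    fun n => integrable_finset_sum _ fun k _ => hterm_int k
  have hSn_val : ∀ n, ∫ x, (∑ k ∈ Finset.range n, lam k * (f k x)^2) ∂TFA.μ01
      = ∑ k ∈ Finset.range n, lam k := by
    intro n
    rw [integral_finset_sum _ (fun k _ => hterm_int k)]
    refine Finset.sum_congr rfl fun k _ => ?_
    have heq : (fun x => lam k * (f k x)^2) = fun x => lam k * (f k x * f k x) :=
      funext fun x => by ring
    rw [heq, integral_const_mul, ortho k, mul_one]
  have hA := TFA.stepA K hK hsymm f hf b hb lam hlam heig'
  have hbd : ∀ n, ∑ k ∈ Finset.range n, lam k ≤ ∫ x, K x x ∂TFA.μ01 := by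
    intro n
    rw [← hSn_val n]
    refine integral_mono_ae (hSn_int n) hdiag_int ?_
    filter_upwards [ae_restrict_mem measurableSet_Icc] with x hx
    exact hA n x hx
  have hsum : Summable lam := summable_of_sum_range_le hlam hbd
  obtain ⟨MK, hMK⟩ := (isCompact_Icc.prod isCompact_Icc).exists_bound_of_continuousOn hK
  have htendsto : Filter.Tendsto (fun n => ∑ k ∈ Finset.range n, lam k) Filter.atTop
      (nhds (∫ x, K x x ∂TFA.μ01)) := by
    rw [show (fun n => ∑ k ∈ Finset.range n, lam k)
        = fun n => ∫ x, (∑ k ∈ Finset.range n, lam k * (f k x)^2) ∂TFA.μ01 from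
      funext fun n => (hSn_val n).symm]
    refine MeasureTheory.tendsto_integral_of_dominated_convergence (μ := TFA.μ01)
      (bound := fun _ => MK) (fun n => (hSn_int n).aestronglyMeasurable) (integrable_const _)
      (fun n => ?_) ?_
    · filter_upwards [ae_restrict_mem measurableSet_Icc] with x hx
      have h0 : 0 ≤ ∑ k ∈ Finset.range n, lam k * (f k x)^2 :=
        Finset.sum_nonneg fun k _ => mul_nonneg (hlam k) (sq_nonneg _)
      have h1 : K x x ≤ MK := (le_abs_self _).trans
        (by simpa [Real.norm_eq_abs] using hMK (x, x) ⟨hx, hx⟩)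
      rw [Real.norm_eq_abs, abs_of_nonneg h0]
      exact (hA n x hx).trans h1
    · filter_upwards [ae_restrict_mem measurableSet_Icc] with x hx
      exact (hBB x hx).tendsto_sum_nat
  have huniq : ∑' k, lam k = ∫ x, K x x ∂TFA.μ01 :=
    tendsto_nhds_unique hsum.hasSum.tendsto_sum_nat htendsto
  rw [← TFA.integral_eq_interval, ← huniq]
  exact hsum.hasSum
end
end

section
/- Let u : [0,∞) × ℝ → ℝ be continuous, 1-periodic in the second variable (u(t,x+1) = u(t,x) for all t, x), continuously differentiable in t and twice continuously differentiable in x for t > 0, and suppose ∂u/∂t = ∂²u/∂x² holds for all t > 0 and x ∈ ℝ. If u(0,x) = 0 for all x ∈ ℝ, then u(t,x) = 0 for all t ≥ 0 and x ∈ ℝ. Consequently, two such solutions of the 1-periodic heat equation with the same continuous initial data coincide. -/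
open Real Set MeasureTheory

/-- If a 1-periodic function has derivatives at `0` and `1`, they agree. -/
lemma periodic_deriv_endpoint_aux {f : ℝ → ℝ} {f0 f1 : ℝ} (hP : ∀ x, f (x + 1) = f x)
    (h0 : HasDerivAt f f0 0) (h1 : HasDerivAt f f1 1) : f1 = f0 := by
  have hf : HasDerivAt (fun z : ℝ => z - 1) 1 1 := (hasDerivAt_id 1).sub_const 1
  have h0' : HasDerivAt f f0 ((1:ℝ) - 1) := by rwa [sub_self]
  have hcomp : HasDerivAt (fun z : ℝ => f (z - 1)) (f0 * 1) 1 := HasDerivAt.comp 1 h0' hf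
  have heq : (fun z : ℝ => f (z - 1)) = f := by
    funext z
    rw [← hP (z - 1)]
    congr 1
    ring
  rw [heq, mul_one] at hcomp
  exact h1.unique hcomp

/-- Uniqueness for the 1-periodic heat equation: a continuous solution `u` of
`∂u/∂t = ∂²u/∂x²` (1-periodic in `x`, `C¹` in `t` and `C²` in `x` for `t > 0`) with
`u (0, ·) = 0` vanishes identically; hence two such solutions with the same continuous
initial data coincide. -/
theorem periodic_heat_uniqueness (u ut ux uxx : ℝ → ℝ → ℝ)
    (hcont : ContinuousOn (fun p : ℝ × ℝ => u p.1 p.2) (Ici 0 ×ˢ univ))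
    (hper : ∀ t ≥ (0:ℝ), ∀ x : ℝ, u t (x + 1) = u t x)
    (hut : ∀ t : ℝ, 0 < t → ∀ x : ℝ, HasDerivAt (fun s => u s x) (ut t x) t)
    (hux : ∀ t : ℝ, 0 < t → ∀ x : ℝ, HasDerivAt (fun z => u t z) (ux t x) x)
    (huxx : ∀ t : ℝ, 0 < t → ∀ x : ℝ, HasDerivAt (fun z => ux t z) (uxx t x) x)
    (hut_cont : ContinuousOn (fun p : ℝ × ℝ => ut p.1 p.2) (Ioi 0 ×ˢ univ))
    (hux_cont : ContinuousOn (fun p : ℝ × ℝ => ux p.1 p.2) (Ioi 0 ×ˢ univ))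
    (huxx_cont : ContinuousOn (fun p : ℝ × ℝ => uxx p.1 p.2) (Ioi 0 ×ˢ univ))
    (hheat : ∀ t : ℝ, 0 < t → ∀ x : ℝ, ut t x = uxx t x)
    (hinit : ∀ x : ℝ, u 0 x = 0) :
    ∀ t ≥ (0:ℝ), ∀ x : ℝ, u t x = 0 := by
  -- slice continuity
  have hslice : ∀ s : ℝ, 0 ≤ s → Continuous (fun x => u s x) := by
    intro s hs
    rw [← continuousOn_univ]
    exact hcont.comp ((continuous_const.prodMk continuous_id).continuousOn)
      (fun x _ => ⟨hs, trivial⟩)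
  have hutslice : ∀ s : ℝ, 0 < s → Continuous (fun x => ut s x) := by
    intro s hs
    rw [← continuousOn_univ]
    exact hut_cont.comp ((continuous_const.prodMk continuous_id).continuousOn)
      (fun x _ => ⟨hs, trivial⟩)
  have huxslice : ∀ s : ℝ, 0 < s → Continuous (fun x => ux s x) := by
    intro s hs
    rw [← continuousOn_univ]
    exact hux_cont.comp ((continuous_const.prodMk continuous_id).continuousOn)
      (fun x _ => ⟨hs, trivial⟩)
  have huxxslice : ∀ s : ℝ, 0 < s → Continuous (fun x => uxx s x) := by
    intro s hs
    rw [← continuousOn_univ]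
    exact huxx_cont.comp ((continuous_const.prodMk continuous_id).continuousOn)
      (fun x _ => ⟨hs, trivial⟩)
  -- extended solution, continuous on all of ℝ × ℝ
  have hv : Continuous (fun p : ℝ × ℝ => u (max p.1 0) p.2) := by
    rw [← continuousOn_univ]
    exact hcont.comp (((continuous_fst.max continuous_const).prodMk continuous_snd).continuousOn)
      (fun p _ => ⟨(le_max_right _ _ : (0:ℝ) ≤ max p.1 0), trivial⟩)
  -- the energy
  set E : ℝ → ℝ := fun t => ∫ x in (0:ℝ)..1, (u (max t 0) x) ^ 2 with hEdef
  have hEcont : Continuous E := by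
    apply intervalIntegral.continuous_parametric_intervalIntegral_of_continuous'
      (f := fun t x => (u (max t 0) x) ^ 2) (μ := volume)
    exact hv.pow 2
  have hEnonneg : ∀ t : ℝ, 0 ≤ E t := fun t =>
    intervalIntegral.integral_nonneg (by norm_num) (fun x _ => sq_nonneg _)
  have hE0 : E 0 = 0 := by
    simp [hEdef, hinit]
  -- derivative of the energy for t > 0
  have hderiv : ∀ t : ℝ, 0 < t →
      HasDerivAt E (∫ x in (0:ℝ)..1, 2 * u t x * ut t x) t := by
    intro t ht
    have hball : Metric.ball t (t/2) ⊆ Ioi (0:ℝ) := by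
      intro s hs
      rw [Metric.mem_ball, Real.dist_eq, abs_lt] at hs
      have := hs.1
      simp only [mem_Ioi]
      linarith
    have hballIcc : Metric.ball t (t/2) ⊆ Icc (t/2) (3*t/2) := by
      intro s hs
      rw [Metric.mem_ball, Real.dist_eq, abs_lt] at hs
      constructor <;> linarith [hs.1, hs.2]
    -- bound on the compact set
    obtain ⟨M, hM⟩ : ∃ M : ℝ, ∀ p ∈ Icc (t/2) (3*t/2) ×ˢ Icc (0:ℝ) 1,
        ‖2 * u p.1 p.2 * ut p.1 p.2‖ ≤ M := by
      have hK : IsCompact (Icc (t/2) (3*t/2) ×ˢ Icc (0:ℝ) 1) :=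
        isCompact_Icc.prod isCompact_Icc
      have hsub : (Icc (t/2) (3*t/2) ×ˢ Icc (0:ℝ) 1) ⊆ Ioi 0 ×ˢ (univ : Set ℝ) := by
        rintro ⟨s, x⟩ ⟨hs, _⟩
        exact ⟨lt_of_lt_of_le (by linarith) hs.1, trivial⟩
      have hsub' : (Icc (t/2) (3*t/2) ×ˢ Icc (0:ℝ) 1) ⊆ Ici 0 ×ˢ (univ : Set ℝ) :=
        hsub.trans (prod_mono_left Ioi_subset_Ici_self)
      have hg : ContinuousOn (fun p : ℝ × ℝ => 2 * u p.1 p.2 * ut p.1 p.2)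
          (Icc (t/2) (3*t/2) ×ˢ Icc (0:ℝ) 1) :=
        (continuousOn_const.mul (hcont.mono hsub')).mul (hut_cont.mono hsub)
      exact hK.exists_bound_of_continuousOn hg
    have key := intervalIntegral.hasDerivAt_integral_of_dominated_loc_of_deriv_le
      (F := fun s x => u s x ^ 2) (F' := fun s x => 2 * u s x * ut s x) (x₀ := t)
      (a := 0) (b := 1) (μ := volume) (bound := fun _ => M) (Metric.ball_mem_nhds t (half_pos ht))
      ?_ ?_ ?_ ?_ ?_ ?_
    · -- transfer to E
      refine key.2.congr_of_eventuallyEq ?_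
      filter_upwards [Ioi_mem_nhds ht] with s hs
      simp only [hEdef]
      rw [max_eq_left (le_of_lt hs)]
    · filter_upwards [Ioi_mem_nhds ht] with s hs
      exact (((hslice s (le_of_lt hs)).pow 2)).aestronglyMeasurable
    · exact ((hslice t ht.le).pow 2).intervalIntegrable 0 1
    · exact ((continuous_const.mul (hslice t ht.le)).mul (hutslice t ht)).aestronglyMeasurable
    · refine Filter.Eventually.of_forall (fun x _ s hs => ?_)
      have hx : x ∈ Icc (0:ℝ) 1 := by
        have : x ∈ Set.uIoc (0:ℝ) 1 := by assumption
        rw [Set.uIoc_of_le (by norm_num : (0:ℝ) ≤ 1)] at this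
        exact ⟨this.1.le, this.2⟩
      exact hM (s, x) ⟨hballIcc hs, hx⟩
    · exact intervalIntegrable_const
    · refine Filter.Eventually.of_forall (fun x _ s hs => ?_)
      have hs' : 0 < s := hball hs
      have := (hut s hs' x).fun_pow 2
      simpa [pow_one] using this
  -- the derivative is nonpositive
  have hneg : ∀ t : ℝ, 0 < t → (∫ x in (0:ℝ)..1, 2 * u t x * ut t x) ≤ 0 := by
    intro t ht
    have h1 : (∫ x in (0:ℝ)..1, 2 * u t x * ut t x)
        = 2 * ∫ x in (0:ℝ)..1, u t x * uxx t x := by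
      rw [← intervalIntegral.integral_const_mul]
      apply intervalIntegral.integral_congr
      intro x _
      show 2 * u t x * ut t x = 2 * (u t x * uxx t x)
      rw [hheat t ht x]
      ring
    have hu10 : u t 1 = u t 0 := by
      have := hper t ht.le 0
      simpa using this
    have hux10 : ux t 1 = ux t 0 :=
      periodic_deriv_endpoint_aux (hper t ht.le) (hux t ht 0) (hux t ht 1)
    have hibp := intervalIntegral.integral_mul_deriv_eq_deriv_mul_of_hasDerivAt
      (a := 0) (b := 1) (u := fun x => u t x) (v := fun x => ux t x)
      (u' := fun x => ux t x) (v' := fun x => uxx t x)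
      ((hslice t ht.le).continuousOn) ((huxslice t ht).continuousOn)
      (fun x _ => hux t ht x) (fun x _ => huxx t ht x)
      ((huxslice t ht).intervalIntegrable 0 1) ((huxxslice t ht).intervalIntegrable 0 1)
    have hnn : 0 ≤ ∫ x in (0:ℝ)..1, ux t x * ux t x :=
      intervalIntegral.integral_nonneg (by norm_num) (fun x _ => mul_self_nonneg _)
    simp only [hu10, hux10, sub_self, zero_sub] at hibp
    rw [h1, hibp]
    linarith
  -- energy is antitone on [0, ∞)
  have hanti : AntitoneOn E (Ici 0) := by
    apply antitoneOn_of_deriv_nonpos (convex_Ici 0) hEcont.continuousOn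
    · intro s hs
      rw [interior_Ici] at hs
      exact (hderiv s hs).differentiableAt.differentiableWithinAt
    · intro s hs
      rw [interior_Ici] at hs
      rw [(hderiv s hs).deriv]
      exact hneg s hs
  have hEzero : ∀ t : ℝ, 0 ≤ t → E t = 0 := by
    intro t ht
    refine le_antisymm ?_ (hEnonneg t)
    have := hanti (self_mem_Ici) ht ht
    rwa [hE0] at this
  -- conclude
  intro t ht x
  rcases eq_or_lt_of_le ht with h | h
  · rw [← h]; exact hinit x
  · -- t > 0
    have hint0 : (∫ y in (0:ℝ)..1, u t y ^ 2) = 0 := by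
      have := hEzero t ht
      simp only [hEdef] at this
      rwa [max_eq_left ht] at this
    have hae : (fun y => u t y ^ 2) =ᵐ[volume.restrict (Ioc (0:ℝ) 1)] 0 :=
      (intervalIntegral.integral_eq_zero_iff_of_le_of_nonneg_ae (by norm_num)
        (Filter.Eventually.of_forall fun y => sq_nonneg _)
        (((hslice t ht.le).pow 2).intervalIntegrable 0 1)).mp hint0
    have heqOn : EqOn (fun y => u t y ^ 2) 0 (Ioo (0:ℝ) 1) := by
      apply Measure.eqOn_of_ae_eq
        (ae_restrict_of_ae_restrict_of_subset Ioo_subset_Ioc_self hae)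
        ((hslice t ht.le).pow 2).continuousOn continuousOn_const
      rw [isOpen_Ioo.interior_eq]
      exact subset_closure
    have hIcc : ∀ y ∈ Icc (0:ℝ) 1, u t y = 0 := by
      have hclosed : IsClosed {y : ℝ | u t y = 0} :=
        isClosed_eq (hslice t ht.le) continuous_const
      have hsub : Ioo (0:ℝ) 1 ⊆ {y : ℝ | u t y = 0} := by
        intro y hy
        have h2 : u t y ^ 2 = 0 := heqOn hy
        exact (pow_eq_zero_iff two_ne_zero).mp h2
      have hcl := closure_minimal hsub hclosed
      rw [closure_Ioo (by norm_num : (0:ℝ) ≠ 1)] at hcl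
      exact fun y hy => hcl hy
    have hP : Function.Periodic (fun z => u t z) 1 := fun y => hper t ht.le y
    have hfr := hP.sub_int_mul_eq (x := x) ⌊x⌋
    have hfr' : u t (Int.fract x) = u t x := by
      rw [mul_one] at hfr
      exact hfr
    rw [← hfr']
    exact hIcc _ ⟨Int.fract_nonneg x, (Int.fract_lt_one x).le⟩
end
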